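/- For all sufficiently large real z, the number of positive divisors g of J = ∏_{r prime, z/2 ≤ r ≤ z} r having exactly ⌊log z⌋ distinct prime factors is at least (z/(15·(log z)²))^{log z}. -/

import Mathlib

open Finset Filter Real


open Finset in
lemma aux_pow_choose {m k : ℕ} (h : k ≤ m) : ((m : ℝ) / k) ^ k ≤ m.choose k := by
  rcases Nat.eq_zero_or_pos k with rfl | hk
  · simp
  have hfact : k.factorial = ∏ i ∈ range k, (k - i) := by
    rw [← Finset.prod_range_add_one_eq_factorial, ← Finset.prod_range_reflect]
    apply Finset.prod_congr rfl
    intro i hi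
    rw [Finset.mem_range] at hi
    omega
  have e1 : m ^ k * ∏ i ∈ range k, (k - i) = ∏ i ∈ range k, (m * (k - i)) := by
    rw [Finset.prod_mul_distrib, Finset.prod_const, Finset.card_range]
  have e2 : k ^ k * ∏ i ∈ range k, (m - i) = ∏ i ∈ range k, (k * (m - i)) := by
    rw [Finset.prod_mul_distrib, Finset.prod_const, Finset.card_range]
  have key : m ^ k * k.factorial ≤ k ^ k * m.descFactorial k := by
    rw [hfact, Nat.descFactorial_eq_prod_range, e1, e2]
    apply Finset.prod_le_prod'
    intro i hi
    rw [Finset.mem_range] at hi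
    have h1 : i ≤ k := hi.le
    have h2 : i ≤ m := hi.le.trans h
    zify [h1, h2]
    nlinarith [(Nat.cast_le (α := ℤ)).2 h, (Nat.cast_le (α := ℤ)).2 hi.le,
      (Nat.cast_nonneg (α := ℤ) i)]
  have key2 : m ^ k ≤ k ^ k * m.choose k := by
    rw [Nat.descFactorial_eq_factorial_mul_choose] at key
    refine Nat.le_of_mul_le_mul_right ?_ (Nat.factorial_pos k)
    calc m ^ k * k.factorial ≤ k ^ k * (k.factorial * m.choose k) := key
      _ = k ^ k * m.choose k * k.factorial := by ring
  have hkpos : (0:ℝ) < (k:ℝ) := by exact_mod_cast hk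
  rw [div_pow, div_le_iff₀ (by positivity)]
  calc ((m:ℝ))^k ≤ (k:ℝ)^k * m.choose k := by exact_mod_cast key2
    _ = (m.choose k : ℝ) * (k:ℝ)^k := by ring


lemma aux_count (P : Finset ℕ) (hP : ∀ p ∈ P, p.Prime) (k : ℕ) :
    P.card.choose k ≤
      ((Nat.divisors (∏ p ∈ P, p)).filter (fun g => g.primeFactors.card = k)).card := by
  rw [← Finset.card_powersetCard]
  apply Finset.card_le_card_of_injOn (fun s => ∏ p ∈ s, p)
  · intro s hs
    rw [Finset.mem_coe, Finset.mem_powersetCard] at hs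
    obtain ⟨hsub, hcard⟩ := hs
    have hprime : ∀ p ∈ s, p.Prime := fun p hp => hP p (hsub hp)
    rw [Finset.mem_coe, Finset.mem_filter, Nat.mem_divisors]
    refine ⟨⟨Finset.prod_dvd_prod_of_subset _ _ _ hsub, ?_⟩, ?_⟩
    · exact Finset.prod_ne_zero_iff.2 fun p hp => (hP p hp).pos.ne'
    · rw [Nat.primeFactors_prod hprime, hcard]
  · intro s hs t ht hst
    rw [Finset.mem_coe, Finset.mem_powersetCard] at hs ht
    have : s = t := by
      have h1 := Nat.primeFactors_prod (fun p hp => hP p (hs.1 hp))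
      have h2 := Nat.primeFactors_prod (fun p hp => hP p (ht.1 hp))
      simp only at hst; rw [← h1, ← h2, hst]
    exact this



lemma aux_cb (n : ℕ) (n_large : 2 < n) :
    Nat.centralBinom n ≤ (2*n)^(Nat.sqrt (2*n)) * 4^(2*n/3) *
      (2*n)^(((Finset.Icc (n+1) (2*n)).filter Nat.Prime).card) := by
  have n_pos : 0 < n := by omega
  have n2_pos : 1 ≤ 2 * n := by omega
  set ν : ℕ → ℕ := fun p => (Nat.centralBinom n).factorization p with hν
  have split : Nat.centralBinom n =
      (∏ p ∈ Finset.range (2*n/3+1), p ^ ν p) * ∏ p ∈ Finset.Ico (2*n/3+1) (2*n+1), p ^ ν p := by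
    rw [← Nat.prod_pow_factorization_centralBinom n, Finset.range_eq_Ico, Finset.range_eq_Ico,
      Finset.prod_Ico_consecutive]
    · omega
    · omega
  rw [split]
  apply Nat.mul_le_mul
  · -- copy of mathlib's centralBinom_le_of_no_bertrand_prime core
    let S := (Finset.range (2 * n / 3 + 1)).filter Nat.Prime
    let f := fun x => x ^ ν x
    have hS : ∏ x ∈ S, f x = ∏ x ∈ Finset.range (2 * n / 3 + 1), f x := by
      refine Finset.prod_filter_of_ne fun p _ h => ?_
      contrapose! h; dsimp only [f, ν]
      rw [Nat.factorization_eq_zero_of_not_prime n.centralBinom h, _root_.pow_zero]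
    rw [show (∏ p ∈ Finset.range (2*n/3+1), p ^ ν p) = ∏ x ∈ Finset.range (2*n/3+1), f x from rfl,
      ← hS, ← Finset.prod_filter_mul_prod_filter_not S (· ≤ Nat.sqrt (2 * n))]
    apply Nat.mul_le_mul
    · refine (Finset.prod_le_prod' fun p _ => (?_ : f p ≤ 2 * n)).trans ?_
      · exact Nat.pow_factorization_choose_le (by omega)
      have hcard : (Finset.Icc 1 (Nat.sqrt (2 * n))).card = Nat.sqrt (2 * n) := by
        rw [Nat.card_Icc, Nat.add_sub_cancel]
      rw [Finset.prod_const]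
      refine Nat.pow_le_pow_right (by omega) ((Finset.card_le_card fun x hx => ?_).trans hcard.le)
      obtain ⟨h1, h2⟩ := Finset.mem_filter.1 hx
      exact Finset.mem_Icc.mpr ⟨(Finset.mem_filter.1 h1).2.one_lt.le, h2⟩
    · refine le_trans ?_ (primorial_le_4_pow (2 * n / 3))
      refine (Finset.prod_le_prod' fun p hp => (?_ : f p ≤ p)).trans ?_
      · obtain ⟨h1, h2⟩ := Finset.mem_filter.1 hp
        refine (Nat.pow_le_pow_right (Finset.mem_filter.1 h1).2.one_lt.le ?_).trans (pow_one p).le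
        exact Nat.factorization_choose_le_one (Nat.sqrt_lt'.mp <| not_le.1 h2)
      refine Finset.prod_le_prod_of_subset_of_one_le' (Finset.filter_subset _ _) ?_
      exact fun p hp _ => (Finset.mem_filter.1 hp).2.one_lt.le
  · -- primes in (n, 2n]
    set T := (Finset.Icc (n+1) (2*n)).filter Nat.Prime with hT
    calc ∏ p ∈ Finset.Ico (2*n/3+1) (2*n+1), p ^ ν p
        ≤ ∏ p ∈ Finset.Ico (2*n/3+1) (2*n+1), (if p ∈ T then 2*n else 1) := by
          apply Finset.prod_le_prod'
          intro p hp
          rw [Finset.mem_Ico] at hp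
          by_cases hpT : p ∈ T
          · rw [if_pos hpT]
            exact Nat.pow_factorization_choose_le (by omega)
          · rw [if_neg hpT]
            by_cases hprime : p.Prime
            · have hnot : ¬ (n + 1 ≤ p ∧ p ≤ 2*n) := by
                intro hc
                exact hpT (Finset.mem_filter.2 ⟨Finset.mem_Icc.2 hc, hprime⟩)
              have hple : p ≤ n := by omega
              have hbig : 2 * n < 3 * p := by omega
              rw [hν]
              simp only
              rw [Nat.factorization_centralBinom_of_two_mul_self_lt_three_mul n_large hple hbig,
                _root_.pow_zero]
            · rw [hν]
              simp only
              rw [Nat.factorization_eq_zero_of_not_prime n.centralBinom hprime, _root_.pow_zero]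
      _ = ∏ p ∈ Finset.Ico (2*n/3+1) (2*n+1) ∩ T, (2*n) := Finset.prod_ite_mem _ _ _
      _ = (2*n) ^ (Finset.Ico (2*n/3+1) (2*n+1) ∩ T).card := Finset.prod_const _
      _ ≤ (2*n) ^ T.card := Nat.pow_le_pow_right (by omega)
            (Finset.card_le_card (Finset.inter_subset_right))




lemma aux_loglem : ∀ᶠ z : ℝ in Filter.atTop, Real.log z ≤ Real.sqrt z / 100 := by
  have h := (isLittleO_log_rpow_atTop (r := 1/2) (by norm_num)).tendsto_div_nhds_zero
  have h2 : ∀ᶠ z : ℝ in atTop, Real.log z / z ^ (1/2 : ℝ) < 1/100 :=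
    h.eventually_lt_const (by norm_num)
  filter_upwards [h2, eventually_ge_atTop (1:ℝ)] with z h1 hz1
  rw [← Real.sqrt_eq_rpow] at h1
  have hs : 0 < Real.sqrt z := Real.sqrt_pos.2 (by linarith)
  rw [div_lt_iff₀ hs] at h1
  calc Real.log z ≤ 1/100 * Real.sqrt z := h1.le
    _ = Real.sqrt z / 100 := by ring

set_option maxHeartbeats 1000000 in
lemma aux_prime : ∀ᶠ z : ℝ in Filter.atTop,
    z / 5 ≤ (((Finset.Icc ⌈z/2⌉₊ ⌊z⌋₊).filter Nat.Prime).card : ℝ) * Real.log z := by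
  filter_upwards [aux_loglem, eventually_ge_atTop (200:ℝ)] with z hlog hz
  set n := ⌊z/2⌋₊ with hn
  have hn100 : 100 ≤ n := Nat.le_floor (by push_cast; linarith)
  have hnle : (n:ℝ) ≤ z/2 := Nat.floor_le (by linarith)
  have hngt : z/2 - 1 < (n:ℝ) := Nat.sub_one_lt_floor _
  set P := (Finset.Icc ⌈z/2⌉₊ ⌊z⌋₊).filter Nat.Prime with hP
  set T := (Finset.Icc (n+1) (2*n)).filter Nat.Prime with hT
  have h2nz : (2*n : ℝ) ≤ z := by linarith
  have hTP : T ⊆ P := by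
    intro p hp
    rw [hT, Finset.mem_filter, Finset.mem_Icc] at hp
    obtain ⟨⟨h1, h2⟩, h3⟩ := hp
    rw [hP, Finset.mem_filter, Finset.mem_Icc]
    have h2n : 2*n ≤ ⌊z⌋₊ := Nat.le_floor (by push_cast; linarith)
    have hc : ⌈z/2⌉₊ ≤ n + 1 := Nat.ceil_le_floor_add_one _
    exact ⟨⟨by omega, by omega⟩, h3⟩
  have key : 4^n ≤ n * ((2*n)^(Nat.sqrt (2*n)) * 4^(2*n/3) * (2*n)^(P.card)) := by
    calc 4^n ≤ n * Nat.centralBinom n := (Nat.four_pow_lt_mul_centralBinom n (by omega)).le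
      _ ≤ n * ((2*n)^(Nat.sqrt (2*n)) * 4^(2*n/3) * (2*n)^(T.card)) :=
          Nat.mul_le_mul_left _ (aux_cb n (by omega))
      _ ≤ _ := by
          apply Nat.mul_le_mul_left
          apply Nat.mul_le_mul_left
          exact Nat.pow_le_pow_right (by omega) (Finset.card_le_card hTP)
  -- move to ℝ
  set N := (n:ℝ) with hN
  set s := ((Nat.sqrt (2*n) : ℕ) : ℝ) with hs
  set d := ((2*n/3 : ℕ) : ℝ) with hd
  set c := (P.card : ℝ) with hc
  have hNpos : (0:ℝ) < N := by rw [hN]; exact_mod_cast Nat.pos_of_ne_zero (by omega)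
  have keyR : (4:ℝ)^n ≤ N * ((2*N)^(Nat.sqrt (2*n)) * 4^(2*n/3) * (2*N)^(P.card)) := by
    rw [hN]; exact_mod_cast key
  have hlogkey : N * Real.log 4 ≤
      Real.log N + (s * Real.log (2*N) + d * Real.log 4 + c * Real.log (2*N)) := by
    have h1 := Real.log_le_log (by positivity) keyR
    rw [Real.log_pow, Real.log_mul (by positivity) (by positivity),
      Real.log_mul (by positivity) (by positivity),
      Real.log_mul (by positivity) (by positivity), Real.log_pow, Real.log_pow, Real.log_pow] at h1
    rw [hs, hd, hc]
    push_cast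
    push_cast at h1
    linarith
  -- bounds
  have hlogz_pos : (0:ℝ) < Real.log z := Real.log_pos (by linarith)
  have h2N_big : (2:ℝ) ≤ 2*N := by linarith
  have hlog2N_nonneg : 0 ≤ Real.log (2*N) := Real.log_nonneg (by linarith)
  have hlog2N_le : Real.log (2*N) ≤ Real.log z := Real.log_le_log (by linarith) (by push_cast; linarith)
  have hlogN_le : Real.log N ≤ Real.log z := Real.log_le_log hNpos (by linarith)
  have hsle : s ≤ Real.sqrt z := by
    rw [hs]
    calc ((Nat.sqrt (2*n) : ℕ) : ℝ) ≤ Real.sqrt ((2*n : ℕ) : ℝ) := Real.nat_sqrt_le_real_sqrt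
      _ ≤ Real.sqrt z := Real.sqrt_le_sqrt (by push_cast; linarith)
  have hdle : d ≤ 2*N/3 := by
    rw [hd, hN]
    calc ((2*n/3 : ℕ) : ℝ) ≤ ((2*n : ℕ) : ℝ) / ((3:ℕ):ℝ) := Nat.cast_div_le
      _ = 2*(n:ℝ)/3 := by push_cast; ring
  have hcpos : 0 ≤ c := by rw [hc]; positivity
  have hlog4 : (1.386:ℝ) ≤ Real.log 4 ∧ Real.log 4 ≤ 1.3863 := by
    have h4 : Real.log 4 = 2 * Real.log 2 := by
      rw [show (4:ℝ) = 2^2 by norm_num, Real.log_pow]; push_cast; ring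
    constructor <;> rw [h4] <;> nlinarith [Real.log_two_gt_d9, Real.log_two_lt_d9]
  have hsqz : Real.sqrt z * Real.log z ≤ z/100 := by
    calc Real.sqrt z * Real.log z ≤ Real.sqrt z * (Real.sqrt z / 100) :=
          mul_le_mul_of_nonneg_left hlog (Real.sqrt_nonneg z)
      _ = (Real.sqrt z * Real.sqrt z) / 100 := by ring
      _ = z / 100 := by rw [Real.mul_self_sqrt (by linarith)]
  have hlogz_le : Real.log z ≤ z/100 := by
    have : Real.sqrt z ≤ z := Real.sqrt_le_iff.2 ⟨by linarith, by nlinarith⟩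
    linarith
  -- combine
  have hclog : c * Real.log (2*N) ≤ c * Real.log z := mul_le_mul_of_nonneg_left hlog2N_le hcpos
  have hslog : s * Real.log (2*N) ≤ Real.sqrt z * Real.log z :=
    mul_le_mul hsle hlog2N_le hlog2N_nonneg (Real.sqrt_nonneg z)
  have hdlog : d * Real.log 4 ≤ (2*N/3) * Real.log 4 :=
    mul_le_mul_of_nonneg_right hdle (by linarith [hlog4.1])
  have hmain : N/3 * Real.log 4 ≤ Real.log z + Real.sqrt z * Real.log z + c * Real.log z := by
    linarith [hlogkey, hclog, hslog, hdlog, hlogN_le, hsqz]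
  have hNlb : (z/2 - 1)/3 * (1.386:ℝ) ≤ N/3 * Real.log 4 := by
    apply mul_le_mul (by linarith) hlog4.1 (by norm_num) (by linarith)
  linarith




set_option maxHeartbeats 1000000 in
/-- For all sufficiently large real `z`, the number of divisors `g` of
`J = ∏_{r prime, z/2 ≤ r ≤ z} r` with exactly `⌊log z⌋` distinct prime factors
is at least `(z / (15 (log z)²))^{log z}`. -/
theorem count_divisors_of_J :
    ∀ᶠ z : ℝ in Filter.atTop,
      (z / (15 * (Real.log z) ^ 2)) ^ Real.log z ≤
        (((Nat.divisors (∏ r ∈ (Finset.Icc ⌈z / 2⌉₊ ⌊z⌋₊).filter Nat.Prime, r)).filter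
          (fun g => g.primeFactors.card = ⌊Real.log z⌋₊)).card : ℝ) := by
  filter_upwards [aux_prime, aux_loglem, eventually_ge_atTop (Real.exp 12),
    eventually_ge_atTop (200:ℝ)] with z hc hlog hz12 hz200
  set L := Real.log z with hLdef
  have hL12 : 12 ≤ L := by
    rw [hLdef, ← Real.log_exp 12]
    exact Real.log_le_log (Real.exp_pos _) hz12
  have hLpos : (0:ℝ) < L := by linarith
  set k := ⌊L⌋₊ with hkdef
  set P := (Finset.Icc ⌈z/2⌉₊ ⌊z⌋₊).filter Nat.Prime with hPdef
  set m := P.card with hmdef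
  set c := (m:ℝ) with hcdef
  set b := z / (15 * L^2) with hbdef
  have hzpos : (0:ℝ) < z := by linarith
  have hkL : (k:ℝ) ≤ L := Nat.floor_le hLpos.le
  have hLk1 : L < (k:ℝ) + 1 := Nat.lt_floor_add_one L
  have hkpos : (0:ℝ) < (k:ℝ) := by linarith
  have hL2z : L^2 ≤ z / 10000 := by
    have h1 : L * L ≤ (Real.sqrt z / 100) * (Real.sqrt z / 100) :=
      mul_le_mul hlog hlog hLpos.le (by positivity)
    have h2 : Real.sqrt z * Real.sqrt z = z := Real.mul_self_sqrt hzpos.le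
    nlinarith
  have h15L : 15 * L^2 ≤ z := by nlinarith
  have h15Lpos : (0:ℝ) < 15 * L^2 := by positivity
  have hb1 : 1 ≤ b := by rw [hbdef, le_div_iff₀ h15Lpos]; linarith
  have hbz : b ≤ z / 2160 := by
    rw [hbdef]
    apply div_le_div_of_nonneg_left hzpos.le (by norm_num)
    nlinarith
  have hc5 : z / (5 * L) ≤ c := by
    rw [div_le_iff₀ (by positivity)]
    nlinarith
  have hLc : L ≤ c := by
    have h1 : L ≤ z / (5*L) := by rw [le_div_iff₀ (by positivity)]; nlinarith
    linarith
  have hkm : k ≤ m := by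
    have : (k:ℝ) ≤ (m:ℝ) := by rw [← hcdef]; linarith
    exact_mod_cast this
  have h3bk : 3 * b * (k:ℝ) ≤ c := by
    have heq : 3 * b * (k:ℝ) = z * k / (5 * L^2) := by rw [hbdef]; field_simp; ring
    have hle : z * k / (5 * L^2) ≤ z / (5 * L) := by
      rw [div_le_div_iff₀ (by positivity) (by positivity)]
      nlinarith [mul_nonneg (mul_nonneg hzpos.le (by positivity : (0:ℝ) ≤ 5*L)) (sub_nonneg.2 hkL)]
    linarith
  have hcbk : 3 * b ≤ c / k := by
    rw [le_div_iff₀ hkpos]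
    linarith
  -- b ≤ 3^k
  have hb3k : b ≤ (3:ℝ)^k := by
    have hbpos : (0:ℝ) < b := by linarith
    have hlogb : Real.log b ≤ L - Real.log 2160 := by
      calc Real.log b ≤ Real.log (z / 2160) := Real.log_le_log hbpos hbz
        _ = L - Real.log 2160 := by rw [Real.log_div hzpos.ne' (by norm_num)]
    have h2160 : (1:ℝ) ≤ Real.log 2160 := by
      rw [Real.le_log_iff_exp_le (by norm_num)]
      have := Real.exp_one_lt_d9
      linarith
    have hlog3 : (1:ℝ) ≤ Real.log 3 := by
      rw [Real.le_log_iff_exp_le (by norm_num)]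
      have := Real.exp_one_lt_d9
      linarith
    have : Real.log b ≤ Real.log ((3:ℝ)^k) := by
      rw [Real.log_pow]
      have : (k:ℝ) * 1 ≤ (k:ℝ) * Real.log 3 := mul_le_mul_of_nonneg_left hlog3 hkpos.le
      push_cast
      nlinarith
    exact (Real.log_le_log_iff hbpos (by positivity)).1 this
  -- main chain
  have step1 : b ^ L ≤ b ^ (((k+1 : ℕ)):ℝ) :=
    Real.rpow_le_rpow_of_exponent_le hb1 (by push_cast; linarith)
  have step2 : b ^ (((k+1 : ℕ)):ℝ) = b ^ (k+1) := Real.rpow_natCast b (k+1)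
  have step3 : b ^ (k+1) ≤ (c / k) ^ k := by
    have hbnn : (0:ℝ) ≤ b := by linarith
    calc b ^ (k+1) = b * b^k := by ring
      _ ≤ (3:ℝ)^k * b^k := mul_le_mul_of_nonneg_right hb3k (pow_nonneg hbnn k)
      _ = (3*b)^k := by rw [mul_pow]
      _ ≤ (c/k)^k := pow_le_pow_left₀ (by positivity) hcbk k
  have step4 : (c / k) ^ k ≤ (m.choose k : ℝ) := aux_pow_choose hkm
  have hPprime : ∀ p ∈ P, p.Prime := fun p hp => (Finset.mem_filter.1 hp).2
  have step5 : (m.choose k : ℝ) ≤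
      (((Nat.divisors (∏ r ∈ P, r)).filter (fun g => g.primeFactors.card = k)).card : ℝ) := by
    exact_mod_cast aux_count P hPprime k
  calc b ^ L ≤ b ^ (((k+1:ℕ)):ℝ) := step1
    _ = b ^ (k+1) := step2
    _ ≤ (c/k)^k := step3
    _ ≤ (m.choose k : ℝ) := step4
    _ ≤ _ := step5
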